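/- Let G₂, G₂' be i.i.d. exponential with mean σ₂ > 0 and G₃, G₃' be i.i.d. exponential with mean σ₃ > 0, all four independent. Then for τ > 0 with τ ≠ σ₃, E[exp(-|G₃ - G₃' + G₂ - G₂'|/τ)] = τ(σ₂σ₃ + τ(σ₂ + σ₃)) / ((τ+σ₂)(τ+σ₃)(σ₂+σ₃)). -/

import Mathlib

open MeasureTheory ProbabilityTheory Real Set
open scoped ENNReal NNReal

private lemma intOn_exp {k : ℝ} (hk : 0 < k) (s : ℝ) :
    IntegrableOn (fun x => exp (-(k * x))) (Ioi s) := by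
  simpa [neg_mul] using exp_neg_integrableOn_Ioi s hk

private lemma I1 {k : ℝ} (hk : 0 < k) (s : ℝ) :
    ∫ x in Ioi s, exp (-(k * x)) = exp (-(k * s)) / k := by
  have h := MeasureTheory.integral_comp_mul_left_Ioi (fun y => exp (-y)) s hk
  simp only [integral_exp_neg_Ioi, smul_eq_mul] at h
  rw [h]; field_simp

private lemma I2 {r : ℝ} (hr : r ≠ 0) {s : ℝ} (hs : 0 ≤ s) :
    ∫ x in Ioc (0:ℝ) s, exp (r * x) = (exp (r * s) - 1) / r := by
  rw [← intervalIntegral.integral_of_le hs]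
  have h : (r * ∫ x in (0:ℝ)..s, exp (r * x)) = exp (r * s) - 1 := by
    rw [intervalIntegral.mul_integral_comp_mul_left (f := fun y => exp y)]
    simp [integral_exp]
  rw [eq_div_iff hr]
  linear_combination h

private lemma intOn_id_mul_exp {k : ℝ} (hk : 0 < k) :
    IntegrableOn (fun x => x * exp (-(k * x))) (Ioi (0:ℝ)) := by
  refine integrable_of_isBigO_exp_neg (half_pos hk) (by fun_prop) ?_
  have hten : Filter.Tendsto (fun x : ℝ => x * exp (-(k/2) * x)) Filter.atTop (nhds 0) := by
    have h := tendsto_rpow_mul_exp_neg_mul_atTop_nhds_zero 1 (k/2) (half_pos hk)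
    refine h.congr' ?_
    filter_upwards [Filter.eventually_gt_atTop 0] with x hx
    rw [rpow_one]
  rw [Asymptotics.isBigO_iff]
  refine ⟨1, ?_⟩
  filter_upwards [Filter.eventually_ge_atTop 0,
    hten.eventually (eventually_le_nhds (by norm_num : (0:ℝ) < 1))] with x hx hle
  rw [norm_eq_abs, norm_eq_abs, abs_of_nonneg (by positivity), abs_of_nonneg (exp_pos _).le,
    one_mul]
  have heq : x * exp (-(k * x)) = (x * exp (-(k/2) * x)) * exp (-(k/2) * x) := by
    rw [mul_assoc, ← exp_add]; ring_nf
  rw [heq]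
  calc (x * exp (-(k/2) * x)) * exp (-(k/2) * x) ≤ 1 * exp (-(k/2) * x) :=
        mul_le_mul_of_nonneg_right hle (exp_pos _).le
    _ = exp (-(k/2) * x) := one_mul _

private lemma I3 {k : ℝ} (hk : 0 < k) :
    ∫ x in Ioi (0:ℝ), x * exp (-(k * x)) = 1 / k ^ 2 := by
  have h := MeasureTheory.integral_comp_mul_left_Ioi (fun y => y * exp (-y)) 0 hk
  have hg : ∫ x in Ioi (0:ℝ), x * exp (-x) = 1 := by
    rw [show (1:ℝ) = Real.Gamma 2 by
        simpa using (Real.Gamma_nat_eq_factorial 1).symm,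
      Real.Gamma_eq_integral (by norm_num)]
    refine setIntegral_congr_fun measurableSet_Ioi (fun x hx => ?_)
    rw [show (2:ℝ) - 1 = 1 by norm_num, Real.rpow_one]
    ring
  rw [mul_zero] at h
  rw [hg, smul_eq_mul, mul_one] at h
  have heq : ∀ x : ℝ, (k * x) * exp (-(k * x)) = k * (x * exp (-(k*x))) := fun x => by ring
  simp only [heq] at h
  rw [MeasureTheory.integral_const_mul] at h
  have hk' : k ≠ 0 := hk.ne'
  rw [show (∫ x in Ioi (0:ℝ), x * exp (-(k * x))) = k⁻¹ * k⁻¹ by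
    field_simp at h ⊢; nlinarith [h]]
  field_simp

private lemma exp_comb (a u v : ℝ) : a * exp u * exp v = a * exp (u + v) := by
  rw [mul_assoc, ← exp_add]

private lemma exp_le_one' {z : ℝ} (hz : z ≤ 0) : exp z ≤ 1 := by
  rw [← exp_zero]; exact exp_le_exp.mpr hz

private lemma Iouter {k1 k2 : ℝ} (h1 : 0 < k1) (h2 : 0 < k2) (C1 C2 : ℝ) :
    ∫ w in Ioi (0:ℝ), (C1 * exp (-(k1 * w)) + C2 * exp (-(k2 * w))) = C1 / k1 + C2 / k2 := by
  rw [integral_add ((intOn_exp h1 0).const_mul C1) ((intOn_exp h2 0).const_mul C2),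
    MeasureTheory.integral_const_mul, MeasureTheory.integral_const_mul, I1 h1 0, I1 h2 0]
  simp [mul_zero, neg_zero, exp_zero]
  ring

private lemma K_le {p q : ℝ} (hp : 0 < p) (hq : 0 < q) {s : ℝ} (hs : s ≤ 0) :
    ∫ x in Ioi (0:ℝ), q * exp (-(q * x)) * exp (-(p * |x - s|))
      = q / (q + p) * exp (p * s) := by
  have h : EqOn (fun x => q * exp (-(q * x)) * exp (-(p * |x - s|)))
      (fun x => (q * exp (p * s)) * exp (-((q + p) * x))) (Ioi 0) := by
    intro x hx
    have hxs : |x - s| = x - s := abs_of_pos (by simp only [mem_Ioi] at hx; linarith)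
    simp only [hxs]
    rw [exp_comb, exp_comb]
    congr 1; ring
  rw [setIntegral_congr_fun measurableSet_Ioi h, MeasureTheory.integral_const_mul,
    I1 (by linarith) 0]
  rw [mul_zero, neg_zero, exp_zero]
  ring

private lemma K_ge {p q : ℝ} (hp : 0 < p) (hq : 0 < q) (hpq : p ≠ q) {s : ℝ} (hs : 0 ≤ s) :
    ∫ x in Ioi (0:ℝ), q * exp (-(q * x)) * exp (-(p * |x - s|))
      = q * (exp (-(q * s)) - exp (-(p * s))) / (p - q) + q / (p + q) * exp (-(q * s)) := by
  set F : ℝ → ℝ := fun x => q * exp (-(q * x)) * exp (-(p * |x - s|)) with hF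
  have hcont : Continuous F := by fun_prop
  have h1 : EqOn F (fun x => (q * exp (-(p * s))) * exp ((p - q) * x)) (Ioc 0 s) := by
    intro x hx
    have hxs : |x - s| = s - x := by
      rw [abs_of_nonpos (by simp only [mem_Ioc] at hx; linarith)]; ring
    simp only [hF, hxs]
    rw [exp_comb, exp_comb]
    congr 1; ring
  have h2 : EqOn F (fun x => (q * exp (p * s)) * exp (-((p + q) * x))) (Ioi s) := by
    intro x hx
    have hxs : |x - s| = x - s := by
      rw [abs_of_nonneg (by simp only [mem_Ioi] at hx; linarith)]
    simp only [hF, hxs]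
    rw [exp_comb, exp_comb]
    congr 1; ring
  have hi1 : IntegrableOn F (Ioc 0 s) := hcont.integrableOn_Ioc
  have hi2 : IntegrableOn F (Ioi s) :=
    IntegrableOn.congr_fun ((intOn_exp (by linarith : (0:ℝ) < p + q) s).const_mul
      (q * exp (p * s))) (fun x hx => (h2 hx).symm) measurableSet_Ioi
  rw [← Ioc_union_Ioi_eq_Ioi hs, setIntegral_union Ioc_disjoint_Ioi_same measurableSet_Ioi hi1 hi2,
    setIntegral_congr_fun measurableSet_Ioc h1, setIntegral_congr_fun measurableSet_Ioi h2,
    MeasureTheory.integral_const_mul, MeasureTheory.integral_const_mul,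
    I2 (sub_ne_zero.mpr hpq) hs, I1 (by linarith) s]
  have e1 : exp (-(p * s)) * exp ((p - q) * s) = exp (-(q * s)) := by
    rw [← exp_add]; ring_nf
  have e2 : exp (p * s) * exp (-((p + q) * s)) = exp (-(q * s)) := by
    rw [← exp_add]; ring_nf
  linear_combination (q / (p - q)) * e1 + (q / (p + q)) * e2

private lemma K_eq {m : ℝ} (hm : 0 < m) {s : ℝ} (hs : 0 ≤ s) :
    ∫ x in Ioi (0:ℝ), m * exp (-(m * x)) * exp (-(m * |x - s|))
      = m * s * exp (-(m * s)) + exp (-(m * s)) / 2 := by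
  set F : ℝ → ℝ := fun x => m * exp (-(m * x)) * exp (-(m * |x - s|)) with hF
  have hcont : Continuous F := by fun_prop
  have h1 : EqOn F (fun _ => m * exp (-(m * s))) (Ioc 0 s) := by
    intro x hx
    have hxs : |x - s| = s - x := by
      rw [abs_of_nonpos (by simp only [mem_Ioc] at hx; linarith)]; ring
    simp only [hF, hxs]
    rw [exp_comb]
    congr 1; ring
  have h2 : EqOn F (fun x => (m * exp (m * s)) * exp (-((m + m) * x))) (Ioi s) := by
    intro x hx
    have hxs : |x - s| = x - s := by
      rw [abs_of_nonneg (by simp only [mem_Ioi] at hx; linarith)]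
    simp only [hF, hxs]
    rw [exp_comb, exp_comb]
    congr 1; ring
  have hi1 : IntegrableOn F (Ioc 0 s) := hcont.integrableOn_Ioc
  have hi2 : IntegrableOn F (Ioi s) :=
    IntegrableOn.congr_fun ((intOn_exp (by linarith : (0:ℝ) < m + m) s).const_mul
      (m * exp (m * s))) (fun x hx => (h2 hx).symm) measurableSet_Ioi
  rw [← Ioc_union_Ioi_eq_Ioi hs, setIntegral_union Ioc_disjoint_Ioi_same measurableSet_Ioi hi1 hi2,
    setIntegral_congr_fun measurableSet_Ioc h1, setIntegral_congr_fun measurableSet_Ioi h2,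
    setIntegral_const, MeasureTheory.integral_const_mul, I1 (by linarith) s]
  rw [Real.volume_real_Ioc_of_le hs, smul_eq_mul]
  have e2 : exp (m * s) * exp (-((m + m) * s)) = exp (-(m * s)) := by
    rw [← exp_add]; ring_nf
  have hmm : m + m ≠ 0 := by positivity
  field_simp
  ring_nf
  ring_nf at e2
  have e2' : exp (s * m) * exp (-(s * m * 2)) = exp (-(s * m)) := by
    rw [← exp_add]; ring_nf
  linear_combination 2 * e2'

private lemma sq_sub_sq_ne {p q : ℝ} (hp : 0 < p) (hq : 0 < q) (hpq : p ≠ q) :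
    q ^ 2 - p ^ 2 ≠ 0 := by
  rw [show q^2 - p^2 = (q - p) * (q + p) by ring]
  exact mul_ne_zero (sub_ne_zero.mpr (Ne.symm hpq)) (by positivity)

private lemma Jval_nonneg {p q : ℝ} (hp : 0 < p) (hq : 0 < q) (hpq : p ≠ q)
    {t : ℝ} (ht : 0 ≤ t) :
    ∫ w in Ioi (0:ℝ), q * exp (-(q * w)) *
        ∫ x in Ioi (0:ℝ), q * exp (-(q * x)) * exp (-(p * |w - x + t|))
      = q^2/(q^2 - p^2) * exp (-(p * t)) - p*q/(q^2 - p^2) * exp (-(q * t)) := by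
  have h1 : p - q ≠ 0 := sub_ne_zero.mpr hpq
  have h2 : p + q ≠ 0 := by positivity
  have hEq : EqOn (fun w => q * exp (-(q * w)) *
        ∫ x in Ioi (0:ℝ), q * exp (-(q * x)) * exp (-(p * |w - x + t|)))
      (fun w => ((q^2/(p-q) + q^2/(p+q)) * exp (-(q*t))) * exp (-((q+q) * w))
        + ((-(q^2/(p-q))) * exp (-(p*t))) * exp (-((q+p) * w))) (Ioi 0) := by
    intro w hw
    have hw0 : (0:ℝ) < w := hw
    have habs : ∀ x : ℝ, |w - x + t| = |x - (w + t)| := fun x => by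
      rw [abs_sub_comm]; congr 1; ring
    simp only [habs]
    rw [K_ge hp hq hpq (by linarith : (0:ℝ) ≤ w + t)]
    rw [show -(q*(w+t)) = -(q*w) + -(q*t) by ring, show -(p*(w+t)) = -(p*w) + -(p*t) by ring,
      show -((q+q)*w) = -(q*w) + -(q*w) by ring, show -((q+p)*w) = -(q*w) + -(p*w) by ring]
    simp only [exp_add]
    field_simp
    ring
  rw [setIntegral_congr_fun measurableSet_Ioi hEq,
    Iouter (by linarith) (by linarith)]
  have h3 : q^2 - p^2 ≠ 0 := sq_sub_sq_ne hp hq hpq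
  field_simp
  ring

private lemma Jswap {p q : ℝ} (hm : 0 < p) (hq : 0 < q) (t : ℝ) :
    (∫ w in Ioi (0:ℝ), q * exp (-(q * w)) *
        ∫ x in Ioi (0:ℝ), q * exp (-(q * x)) * exp (-(p * |w - x + t|)))
    = ∫ w in Ioi (0:ℝ), q * exp (-(q * w)) *
        ∫ x in Ioi (0:ℝ), q * exp (-(q * x)) * exp (-(p * |w - x + -t|)) := by
  have hInt : Integrable (Function.uncurry fun w x =>
      q * exp (-(q * w)) * (q * exp (-(q * x)) * exp (-(p * |w - x + t|))))
      ((volume.restrict (Ioi 0)).prod (volume.restrict (Ioi 0))) := by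
    refine Integrable.mono' (Integrable.mul_prod ((intOn_exp hq 0).const_mul q)
      ((intOn_exp hq 0).const_mul q)) ?_ ?_
    · apply Continuous.aestronglyMeasurable; fun_prop
    · refine Filter.Eventually.of_forall (fun z => ?_)
      rw [Function.uncurry_apply_pair, norm_eq_abs,
        abs_of_nonneg (by positivity)]
      have e1 : exp (-(p * |z.1 - z.2 + t|)) ≤ 1 := exp_le_one' (neg_nonpos.mpr (by positivity))
      nlinarith [exp_pos (-(q * z.1)), exp_pos (-(q * z.2)), exp_pos (-(p * |z.1 - z.2 + t|)),
        mul_pos (mul_pos hq (exp_pos (-(q * z.1)))) (mul_pos hq (exp_pos (-(q * z.2))))]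
  have hiter : ∀ s : ℝ, (∫ w in Ioi (0:ℝ), q * exp (-(q * w)) *
        ∫ x in Ioi (0:ℝ), q * exp (-(q * x)) * exp (-(p * |w - x + s|)))
      = ∫ w in Ioi (0:ℝ), ∫ x in Ioi (0:ℝ),
          q * exp (-(q * w)) * (q * exp (-(q * x)) * exp (-(p * |w - x + s|))) := by
    intro s
    refine setIntegral_congr_fun measurableSet_Ioi (fun w hw => ?_)
    rw [MeasureTheory.integral_const_mul]
  rw [hiter t, hiter (-t), integral_integral_swap hInt]
  refine setIntegral_congr_fun measurableSet_Ioi (fun a ha => ?_)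
  refine setIntegral_congr_fun measurableSet_Ioi (fun b hb => ?_)
  have habs : |b - a + t| = |a - b + -t| := by
    rw [← abs_neg]; congr 1; ring
  simp only [habs]
  ring

private lemma Jval {p q : ℝ} (hp : 0 < p) (hq : 0 < q) (hpq : p ≠ q) (t : ℝ) :
    ∫ w in Ioi (0:ℝ), q * exp (-(q * w)) *
        ∫ x in Ioi (0:ℝ), q * exp (-(q * x)) * exp (-(p * |w - x + t|))
      = q^2/(q^2 - p^2) * exp (-(p * |t|)) - p*q/(q^2 - p^2) * exp (-(q * |t|)) := by
  rcases le_total 0 t with ht|ht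
  · rw [abs_of_nonneg ht]; exact Jval_nonneg hp hq hpq ht
  · rw [abs_of_nonpos ht, Jswap hp hq t]
    exact Jval_nonneg hp hq hpq (t := -t) (by linarith)

private lemma Mval {m c : ℝ} (hm : 0 < m) (hc : 0 < c) :
    ∫ u in Ioi (0:ℝ), m * exp (-(m * u)) *
        ∫ v in Ioi (0:ℝ), m * exp (-(m * v)) * exp (-(c * |u - v|))
      = m / (m + c) := by
  rcases eq_or_ne c m with rfl|hcm
  · have hEq : EqOn (fun u => c * exp (-(c * u)) *
          ∫ v in Ioi (0:ℝ), c * exp (-(c * v)) * exp (-(c * |u - v|)))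
        (fun u => c^2 * (u * exp (-((c+c) * u))) + (c/2) * exp (-((c+c) * u))) (Ioi 0) := by
      intro u hu
      have hu0 : (0:ℝ) < u := hu
      have habs : ∀ v : ℝ, |u - v| = |v - u| := fun v => abs_sub_comm u v
      simp only [habs]
      rw [K_eq hc hu0.le]
      rw [show -((c+c)*u) = -(c*u) + -(c*u) by ring]
      simp only [exp_add]
      ring
    rw [setIntegral_congr_fun measurableSet_Ioi hEq,
      integral_add ((intOn_id_mul_exp (by linarith)).const_mul _)
        ((intOn_exp (by linarith) 0).const_mul _),
      MeasureTheory.integral_const_mul, MeasureTheory.integral_const_mul,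
      I3 (by linarith), I1 (by linarith) 0]
    rw [mul_zero, neg_zero, exp_zero]
    field_simp
    ring
  · have h1 : c - m ≠ 0 := sub_ne_zero.mpr hcm
    have h2 : c + m ≠ 0 := by positivity
    have hEq : EqOn (fun u => m * exp (-(m * u)) *
          ∫ v in Ioi (0:ℝ), m * exp (-(m * v)) * exp (-(c * |u - v|)))
        (fun u => (m^2/(c-m) + m^2/(c+m)) * exp (-((m+m) * u))
          + (-(m^2/(c-m))) * exp (-((m+c) * u))) (Ioi 0) := by
      intro u hu
      have hu0 : (0:ℝ) < u := hu
      have habs : ∀ v : ℝ, |u - v| = |v - u| := fun v => abs_sub_comm u v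
      simp only [habs]
      rw [K_ge hc hm hcm hu0.le]
      rw [show -((m+m)*u) = -(m*u) + -(m*u) by ring, show -((m+c)*u) = -(m*u) + -(c*u) by ring]
      simp only [exp_add]
      field_simp
      ring
    rw [setIntegral_congr_fun measurableSet_Ioi hEq,
      Iouter (by linarith) (by linarith)]
    field_simp
    ring

private lemma glue {m p q A B : ℝ} (hm : 0 < m) (hp : 0 < p) (hq : 0 < q) :
    ∫ u in Ioi (0:ℝ), m * exp (-(m * u)) *
        ∫ v in Ioi (0:ℝ), m * exp (-(m * v)) *
          (A * exp (-(p * |u - v|)) - B * exp (-(q * |u - v|)))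
      = A * (m / (m + p)) - B * (m / (m + q)) := by
  have hex : ∀ (c : ℝ), 0 ≤ c → ∀ u x : ℝ, |exp (-(c * |u - x|))| ≤ 1 := fun c hc u x => by
    rw [abs_exp]; exact exp_le_one' (neg_nonpos.mpr (by positivity))
  have hintIn : ∀ (c : ℝ), 0 < c → ∀ u : ℝ, IntegrableOn
      (fun v => m * exp (-(m * v)) * exp (-(c * |u - v|))) (Ioi (0:ℝ)) := by
    intro c hc u
    refine Integrable.mono' ((intOn_exp hm 0).const_mul m) ?_ ?_
    · apply Continuous.aestronglyMeasurable; fun_prop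
    · refine Filter.Eventually.of_forall (fun v => ?_)
      rw [norm_eq_abs, abs_mul]
      calc |m * exp (-(m*v))| * |exp (-(c*|u-v|))|
          ≤ |m * exp (-(m*v))| * 1 := mul_le_mul_of_nonneg_left (hex c hc.le u v) (abs_nonneg _)
        _ = m * exp (-(m*v)) := by rw [mul_one, abs_of_nonneg (by positivity)]
  have hsplit : ∀ u : ℝ, (∫ v in Ioi (0:ℝ), m * exp (-(m * v)) *
        (A * exp (-(p * |u - v|)) - B * exp (-(q * |u - v|))))
      = A * (∫ v in Ioi (0:ℝ), m * exp (-(m * v)) * exp (-(p * |u - v|)))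
        - B * (∫ v in Ioi (0:ℝ), m * exp (-(m * v)) * exp (-(q * |u - v|))) := by
    intro u
    rw [← MeasureTheory.integral_const_mul, ← MeasureTheory.integral_const_mul,
      ← integral_sub ((hintIn p hp u).const_mul A) ((hintIn q hq u).const_mul B)]
    refine setIntegral_congr_fun measurableSet_Ioi (fun v hv => ?_)
    ring
  simp only [hsplit]
  have hIn : ∀ (c : ℝ), 0 < c → IntegrableOn (fun u => m * exp (-(m*u)) *
      ∫ v in Ioi (0:ℝ), m * exp (-(m * v)) * exp (-(c * |u - v|))) (Ioi (0:ℝ)) := by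
    intro c hc
    refine Integrable.mono' ((intOn_exp hm 0).const_mul m) ?_ ?_
    · refine AEStronglyMeasurable.mul
        ((continuous_const.mul (by fun_prop : Continuous fun u : ℝ =>
          exp (-(m*u)))).aestronglyMeasurable) ?_
      have hsm : StronglyMeasurable (fun u : ℝ => ∫ v, (fun z : ℝ × ℝ =>
          m * exp (-(m * z.2)) * exp (-(c * |z.1 - z.2|))) (u, v) ∂(volume.restrict (Ioi 0))) :=
        MeasureTheory.StronglyMeasurable.integral_prod_right'
          (f := fun z : ℝ × ℝ => m * exp (-(m * z.2)) * exp (-(c * |z.1 - z.2|)))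
          ((by fun_prop : Continuous fun z : ℝ × ℝ =>
            m * exp (-(m * z.2)) * exp (-(c * |z.1 - z.2|))).stronglyMeasurable)
      exact hsm.aestronglyMeasurable
    · refine Filter.Eventually.of_forall (fun u => ?_)
      rw [norm_eq_abs, abs_mul, abs_of_nonneg (show (0:ℝ) ≤ m * exp (-(m*u)) by positivity)]
      have hb : |∫ v in Ioi (0:ℝ), m * exp (-(m * v)) * exp (-(c * |u - v|))| ≤ 1 := by
        calc |∫ v in Ioi (0:ℝ), m * exp (-(m * v)) * exp (-(c * |u - v|))|
            ≤ ∫ v in Ioi (0:ℝ), |m * exp (-(m * v)) * exp (-(c * |u - v|))| := by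
              have h0 := norm_integral_le_integral_norm
                (μ := volume.restrict (Ioi 0))
                (fun v => m * exp (-(m * v)) * exp (-(c * |u - v|)))
              simp only [Real.norm_eq_abs] at h0
              exact h0
          _ ≤ ∫ v in Ioi (0:ℝ), m * exp (-(m * v)) := by
              refine integral_mono_of_nonneg (Filter.Eventually.of_forall fun v => abs_nonneg _)
                ((intOn_exp hm 0).const_mul m) (Filter.Eventually.of_forall fun v => ?_)
              dsimp only
              rw [abs_mul, abs_of_nonneg (show (0:ℝ) ≤ m * exp (-(m*v)) by positivity)]
              exact mul_le_of_le_one_right (by positivity) (hex c hc.le u v)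
          _ = 1 := by
              rw [MeasureTheory.integral_const_mul, I1 hm 0, mul_zero, neg_zero, exp_zero]
              field_simp
      exact mul_le_of_le_one_right (by positivity) hb
  have houter : ∀ u : ℝ, m * exp (-(m*u)) *
      (A * (∫ v in Ioi (0:ℝ), m * exp (-(m * v)) * exp (-(p * |u - v|)))
        - B * (∫ v in Ioi (0:ℝ), m * exp (-(m * v)) * exp (-(q * |u - v|))))
      = A * (m * exp (-(m*u)) * ∫ v in Ioi (0:ℝ), m * exp (-(m * v)) * exp (-(p * |u - v|)))
        - B * (m * exp (-(m*u)) * ∫ v in Ioi (0:ℝ), m * exp (-(m * v)) * exp (-(q * |u - v|))) :=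
    fun u => by ring
  simp only [houter]
  rw [integral_sub ((hIn p hp).const_mul A) ((hIn q hq).const_mul B),
    MeasureTheory.integral_const_mul, MeasureTheory.integral_const_mul, Mval hm hp, Mval hm hq]

private lemma expPDFReal_eq (r : ℝ) (x : ℝ) :
    exponentialPDFReal r x = if 0 ≤ x then r * exp (-(r * x)) else 0 := by
  rw [exponentialPDFReal, gammaPDFReal]
  split_ifs <;> simp [Real.Gamma_one]

private lemma integral_expMeasure {r : ℝ} (hr : 0 < r) (g : ℝ → ℝ) :
    ∫ x, g x ∂(expMeasure r) = ∫ x in Ioi 0, r * exp (-(r * x)) * g x := by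
  have h0 : expMeasure r =
      (volume : Measure ℝ).withDensity (fun x => ((exponentialPDFReal r x).toNNReal : ℝ≥0∞)) :=
    rfl
  rw [h0, integral_withDensity_eq_integral_smul (measurable_exponentialPDFReal r).real_toNNReal g]
  have h1 : ∀ x : ℝ, (exponentialPDFReal r x).toNNReal • g x = exponentialPDFReal r x * g x := by
    intro x
    rw [NNReal.smul_def, Real.coe_toNNReal _ (exponentialPDFReal_nonneg hr x)]
    rfl
  simp only [h1]
  rw [← setIntegral_eq_integral_of_forall_compl_eq_zero (s := Ici 0)
    (fun x hx => by rw [expPDFReal_eq, if_neg (by simpa using hx), zero_mul]),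
    integral_Ici_eq_integral_Ioi]
  refine setIntegral_congr_fun measurableSet_Ioi (fun x hx => ?_)
  rw [expPDFReal_eq, if_pos (le_of_lt hx)]

private lemma abs_int_le_one {k : ℝ} (hk : 0 < k) {F : ℝ → ℝ} (hbd : ∀ x, |F x| ≤ 1) :
    |∫ v in Ioi (0:ℝ), k * exp (-(k * v)) * F v| ≤ 1 := by
  calc |∫ v in Ioi (0:ℝ), k * exp (-(k * v)) * F v|
      ≤ ∫ v in Ioi (0:ℝ), |k * exp (-(k * v)) * F v| := by
        have h0 := norm_integral_le_integral_norm (μ := volume.restrict (Ioi 0))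
          (fun v => k * exp (-(k * v)) * F v)
        simp only [Real.norm_eq_abs] at h0
        exact h0
    _ ≤ ∫ v in Ioi (0:ℝ), k * exp (-(k * v)) := by
        refine integral_mono_of_nonneg (Filter.Eventually.of_forall fun v => abs_nonneg _)
          ((intOn_exp hk 0).const_mul k) (Filter.Eventually.of_forall fun v => ?_)
        dsimp only
        rw [abs_mul, abs_of_nonneg (show (0:ℝ) ≤ k * exp (-(k*v)) by positivity)]
        exact mul_le_of_le_one_right (by positivity) (hbd v)
    _ = 1 := by
        rw [MeasureTheory.integral_const_mul, I1 hk 0, mul_zero, neg_zero, exp_zero]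
        field_simp

private lemma iIndepFun_ae_congr {Ω : Type*} [MeasurableSpace Ω] {P : Measure Ω}
    {f g : Fin 4 → Ω → ℝ}
    (hf : iIndepFun (m := fun _ : Fin 4 => (inferInstance : MeasurableSpace ℝ)) f P)
    (h : ∀ i, f i =ᵐ[P] g i) :
    iIndepFun (m := fun _ : Fin 4 => (inferInstance : MeasurableSpace ℝ)) g P := by
  rw [iIndepFun_iff_measure_inter_preimage_eq_mul] at hf ⊢
  intro S sets hsets
  have hae : ∀ᵐ ω ∂P, ∀ i, f i ω = g i ω := by
    rw [MeasureTheory.ae_all_iff]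
    exact fun i => h i
  have h1 : P (⋂ i ∈ S, g i ⁻¹' sets i) = P (⋂ i ∈ S, f i ⁻¹' sets i) := by
    apply measure_congr
    filter_upwards [hae] with ω hω
    rw [eq_iff_iff]
    show ω ∈ (⋂ i ∈ S, g i ⁻¹' sets i) ↔ ω ∈ (⋂ i ∈ S, f i ⁻¹' sets i)
    simp only [Set.mem_iInter, Set.mem_preimage, hω]
  rw [h1, hf S hsets]
  refine Finset.prod_congr rfl (fun i hi => ?_)
  apply measure_congr
  filter_upwards [h i] with ω hω
  rw [eq_iff_iff]
  show ω ∈ f i ⁻¹' sets i ↔ ω ∈ g i ⁻¹' sets i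
  simp only [Set.mem_preimage, hω]

/-- For `G₂, G₂'` i.i.d. exponential with mean `σ₂`, `G₃, G₃'` i.i.d. exponential with mean `σ₃`,
all four independent, and `τ > 0` with `τ ≠ σ₃`,
`E[exp(-|G₃-G₃'+G₂-G₂'|/τ)] = τ(σ₂σ₃ + τ(σ₂+σ₃)) / ((τ+σ₂)(τ+σ₃)(σ₂+σ₃))`. -/
theorem exp_delay_sum_transform {Ω : Type*} [MeasurableSpace Ω] (P : Measure Ω)
    [IsProbabilityMeasure P]
    (G₂ G₂' G₃ G₃' : Ω → ℝ) (σ₂ σ₃ τ : ℝ) (hσ₂ : 0 < σ₂) (hσ₃ : 0 < σ₃) (hτ : 0 < τ)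
    (hne : τ ≠ σ₃)
    (hG₂ : Measure.map G₂ P = expMeasure σ₂⁻¹)
    (hG₂' : Measure.map G₂' P = expMeasure σ₂⁻¹)
    (hG₃ : Measure.map G₃ P = expMeasure σ₃⁻¹)
    (hG₃' : Measure.map G₃' P = expMeasure σ₃⁻¹)
    (hindep : iIndepFun (m := fun _ : Fin 4 => (inferInstance : MeasurableSpace ℝ))
      ![G₂, G₂', G₃, G₃'] P) :
    ∫ ω, exp (-|G₃ ω - G₃' ω + G₂ ω - G₂' ω| / τ) ∂P =
      τ * (σ₂ * σ₃ + τ * (σ₂ + σ₃)) / ((τ + σ₂) * (τ + σ₃) * (σ₂ + σ₃)) := by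
  have hm : (0:ℝ) < σ₂⁻¹ := inv_pos.mpr hσ₂
  have hq : (0:ℝ) < σ₃⁻¹ := inv_pos.mpr hσ₃
  have hp : (0:ℝ) < τ⁻¹ := inv_pos.mpr hτ
  have hpq : τ⁻¹ ≠ σ₃⁻¹ := fun h => hne (by rw [← inv_inv τ, h, inv_inv])
  haveI hP2 : IsProbabilityMeasure (expMeasure σ₂⁻¹) := isProbabilityMeasure_expMeasure hm
  haveI hP3 : IsProbabilityMeasure (expMeasure σ₃⁻¹) := isProbabilityMeasure_expMeasure hq
  -- a.e.-measurability of the G's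
  have ham2 : AEMeasurable G₂ P :=
    aemeasurable_of_map_neZero (by rw [hG₂]; exact ⟨IsProbabilityMeasure.ne_zero _⟩)
  have ham2' : AEMeasurable G₂' P :=
    aemeasurable_of_map_neZero (by rw [hG₂']; exact ⟨IsProbabilityMeasure.ne_zero _⟩)
  have ham3 : AEMeasurable G₃ P :=
    aemeasurable_of_map_neZero (by rw [hG₃]; exact ⟨IsProbabilityMeasure.ne_zero _⟩)
  have ham3' : AEMeasurable G₃' P :=
    aemeasurable_of_map_neZero (by rw [hG₃']; exact ⟨IsProbabilityMeasure.ne_zero _⟩)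
  -- measurable modifications
  obtain ⟨f0, f0m, e0⟩ : ∃ f, Measurable f ∧ G₂ =ᵐ[P] f :=
    ⟨ham2.mk G₂, ham2.measurable_mk, ham2.ae_eq_mk⟩
  obtain ⟨f1, f1m, e1⟩ : ∃ f, Measurable f ∧ G₂' =ᵐ[P] f :=
    ⟨ham2'.mk G₂', ham2'.measurable_mk, ham2'.ae_eq_mk⟩
  obtain ⟨f2, f2m, e2⟩ : ∃ f, Measurable f ∧ G₃ =ᵐ[P] f :=
    ⟨ham3.mk G₃, ham3.measurable_mk, ham3.ae_eq_mk⟩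
  obtain ⟨f3, f3m, e3⟩ : ∃ f, Measurable f ∧ G₃' =ᵐ[P] f :=
    ⟨ham3'.mk G₃', ham3'.measurable_mk, ham3'.ae_eq_mk⟩
  have hmap0 : Measure.map f0 P = expMeasure σ₂⁻¹ := (Measure.map_congr e0).symm.trans hG₂
  have hmap1 : Measure.map f1 P = expMeasure σ₂⁻¹ := (Measure.map_congr e1).symm.trans hG₂'
  have hmap2 : Measure.map f2 P = expMeasure σ₃⁻¹ := (Measure.map_congr e2).symm.trans hG₃
  have hmap3 : Measure.map f3 P = expMeasure σ₃⁻¹ := (Measure.map_congr e3).symm.trans hG₃'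
  have hind' : iIndepFun (m := fun _ : Fin 4 => (inferInstance : MeasurableSpace ℝ))
      ![f0, f1, f2, f3] P := by
    refine iIndepFun_ae_congr hindep ?_
    intro i
    fin_cases i
    exacts [e0, e1, e2, e3]
  have hmeas : ∀ i, Measurable (![f0, f1, f2, f3] i) := by
    intro i
    fin_cases i
    exacts [f0m, f1m, f2m, f3m]
  have hpair : IndepFun (fun ω => (f0 ω, f1 ω)) (fun ω => (f2 ω, f3 ω)) P :=
    hind'.indepFun_prodMk_prodMk hmeas 0 1 2 3
      (by decide) (by decide) (by decide) (by decide)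
  have hsub : Measurable (fun z : ℝ × ℝ => z.1 - z.2) := measurable_fst.sub measurable_snd
  have hXY : IndepFun (fun ω => f0 ω - f1 ω) (fun ω => f2 ω - f3 ω) P :=
    hpair.comp hsub hsub
  have h01 : IndepFun f0 f1 P := hind'.indepFun (show (0 : Fin 4) ≠ 1 by decide)
  have h23 : IndepFun f2 f3 P := hind'.indepFun (show (2 : Fin 4) ≠ 3 by decide)
  have hmp01 : Measure.map (fun ω => (f0 ω, f1 ω)) P
      = (expMeasure σ₂⁻¹).prod (expMeasure σ₂⁻¹) := by
    rw [(indepFun_iff_map_prod_eq_prod_map_map f0m.aemeasurable f1m.aemeasurable).mp h01,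
      hmap0, hmap1]
  have hmp23 : Measure.map (fun ω => (f2 ω, f3 ω)) P
      = (expMeasure σ₃⁻¹).prod (expMeasure σ₃⁻¹) := by
    rw [(indepFun_iff_map_prod_eq_prod_map_map f2m.aemeasurable f3m.aemeasurable).mp h23,
      hmap2, hmap3]
  have hmX : Measure.map (fun ω => f0 ω - f1 ω) P
      = ((expMeasure σ₂⁻¹).prod (expMeasure σ₂⁻¹)).map (fun z : ℝ × ℝ => z.1 - z.2) := by
    rw [← hmp01, Measure.map_map hsub (f0m.prodMk f1m)]
    rfl
  have hmY : Measure.map (fun ω => f2 ω - f3 ω) P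
      = ((expMeasure σ₃⁻¹).prod (expMeasure σ₃⁻¹)).map (fun z : ℝ × ℝ => z.1 - z.2) := by
    rw [← hmp23, Measure.map_map hsub (f2m.prodMk f3m)]
    rfl
  haveI iX : IsProbabilityMeasure (Measure.map (fun ω => f0 ω - f1 ω) P) :=
    Measure.isProbabilityMeasure_map (f0m.sub f1m).aemeasurable
  haveI iY : IsProbabilityMeasure (Measure.map (fun ω => f2 ω - f3 ω) P) :=
    Measure.isProbabilityMeasure_map (f2m.sub f3m).aemeasurable
  have hφc : Continuous (fun z : ℝ × ℝ => exp (-(τ⁻¹ * |z.2 + z.1|))) := by fun_prop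
  have hφbd : ∀ z : ℝ × ℝ, |exp (-(τ⁻¹ * |z.2 + z.1|))| ≤ 1 := fun z => by
    rw [abs_exp]; exact exp_le_one' (neg_nonpos.mpr (by positivity))
  have hgbd : ∀ t : ℝ, |∫ w in Ioi (0:ℝ), σ₃⁻¹ * exp (-(σ₃⁻¹ * w)) *
      ∫ x in Ioi (0:ℝ), σ₃⁻¹ * exp (-(σ₃⁻¹ * x)) * exp (-(τ⁻¹ * |w - x + t|))| ≤ 1 := by
    intro t
    refine abs_int_le_one hq (fun w => abs_int_le_one hq (fun x => ?_))
    rw [abs_exp]; exact exp_le_one' (neg_nonpos.mpr (by positivity))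
  have hin : StronglyMeasurable (fun zw : ℝ × ℝ => ∫ x, (fun u : (ℝ × ℝ) × ℝ =>
      σ₃⁻¹ * exp (-(σ₃⁻¹ * u.2)) * exp (-(τ⁻¹ * |u.1.2 - u.2 + u.1.1|))) (zw, x)
      ∂(volume.restrict (Ioi 0))) :=
    StronglyMeasurable.integral_prod_right'
      ((by fun_prop : Continuous (fun u : (ℝ × ℝ) × ℝ =>
        σ₃⁻¹ * exp (-(σ₃⁻¹ * u.2)) * exp (-(τ⁻¹ * |u.1.2 - u.2 + u.1.1|)))).stronglyMeasurable)
  have hSM : StronglyMeasurable (fun t : ℝ => ∫ w in Ioi (0:ℝ), σ₃⁻¹ * exp (-(σ₃⁻¹ * w)) *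
      ∫ x in Ioi (0:ℝ), σ₃⁻¹ * exp (-(σ₃⁻¹ * x)) * exp (-(τ⁻¹ * |w - x + t|))) :=
    StronglyMeasurable.integral_prod_right'
      (f := fun zw : ℝ × ℝ => σ₃⁻¹ * exp (-(σ₃⁻¹ * zw.2)) *
        ∫ x in Ioi (0:ℝ), σ₃⁻¹ * exp (-(σ₃⁻¹ * x)) * exp (-(τ⁻¹ * |zw.2 - x + zw.1|)))
      (((by fun_prop : Continuous (fun zw : ℝ × ℝ =>
        σ₃⁻¹ * exp (-(σ₃⁻¹ * zw.2)))).stronglyMeasurable).mul hin)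
  -- step 1
  have step1 : ∫ ω, exp (-|G₃ ω - G₃' ω + G₂ ω - G₂' ω| / τ) ∂P
      = ∫ ω, exp (-(τ⁻¹ * |(f2 ω - f3 ω) + (f0 ω - f1 ω)|)) ∂P := by
    apply integral_congr_ae
    filter_upwards [e0, e1, e2, e3] with ω h0 h1 h2 h3
    rw [← h0, ← h1, ← h2, ← h3]
    have harg : G₃ ω - G₃' ω + G₂ ω - G₂' ω
        = (G₃ ω - G₃' ω) + (G₂ ω - G₂' ω) := by ring
    rw [harg, neg_div, div_eq_inv_mul]
  have step2 : (∫ ω, exp (-(τ⁻¹ * |(f2 ω - f3 ω) + (f0 ω - f1 ω)|)) ∂P)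
      = ∫ z : ℝ × ℝ, exp (-(τ⁻¹ * |z.2 + z.1|))
          ∂(Measure.map (fun ω => (f0 ω - f1 ω, f2 ω - f3 ω)) P) :=
    (integral_map ((f0m.sub f1m).prodMk (f2m.sub f3m)).aemeasurable
      hφc.aestronglyMeasurable).symm
  have step3 : Measure.map (fun ω => (f0 ω - f1 ω, f2 ω - f3 ω)) P
      = (Measure.map (fun ω => f0 ω - f1 ω) P).prod (Measure.map (fun ω => f2 ω - f3 ω) P) :=
    (indepFun_iff_map_prod_eq_prod_map_map (f0m.sub f1m).aemeasurable
      (f2m.sub f3m).aemeasurable).mp hXY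
  have hint : Integrable (fun z : ℝ × ℝ => exp (-(τ⁻¹ * |z.2 + z.1|)))
      ((Measure.map (fun ω => f0 ω - f1 ω) P).prod (Measure.map (fun ω => f2 ω - f3 ω) P)) :=
    ⟨hφc.aestronglyMeasurable, HasFiniteIntegral.of_bounded (C := 1)
      (Filter.Eventually.of_forall fun z => by rw [norm_eq_abs]; exact hφbd z)⟩
  have step4 : (∫ z : ℝ × ℝ, exp (-(τ⁻¹ * |z.2 + z.1|))
        ∂((Measure.map (fun ω => f0 ω - f1 ω) P).prod (Measure.map (fun ω => f2 ω - f3 ω) P)))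
      = ∫ x, ∫ y, exp (-(τ⁻¹ * |y + x|)) ∂(Measure.map (fun ω => f2 ω - f3 ω) P)
          ∂(Measure.map (fun ω => f0 ω - f1 ω) P) :=
    integral_prod _ hint
  have hF : ∀ t : ℝ, (∫ y, exp (-(τ⁻¹ * |y + t|)) ∂(Measure.map (fun ω => f2 ω - f3 ω) P))
      = ∫ w in Ioi (0:ℝ), σ₃⁻¹ * exp (-(σ₃⁻¹ * w)) *
          ∫ x in Ioi (0:ℝ), σ₃⁻¹ * exp (-(σ₃⁻¹ * x)) * exp (-(τ⁻¹ * |w - x + t|)) := by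
    intro t
    rw [hmY]
    have hmap : (∫ y, exp (-(τ⁻¹ * |y + t|))
          ∂(Measure.map (fun z : ℝ × ℝ => z.1 - z.2)
            ((expMeasure σ₃⁻¹).prod (expMeasure σ₃⁻¹))))
        = ∫ z : ℝ × ℝ, exp (-(τ⁻¹ * |z.1 - z.2 + t|))
            ∂((expMeasure σ₃⁻¹).prod (expMeasure σ₃⁻¹)) :=
      integral_map hsub.aemeasurable (by fun_prop : Continuous fun y : ℝ =>
        exp (-(τ⁻¹ * |y + t|))).aestronglyMeasurable
    have hint3 : Integrable (fun z : ℝ × ℝ => exp (-(τ⁻¹ * |z.1 - z.2 + t|)))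
        ((expMeasure σ₃⁻¹).prod (expMeasure σ₃⁻¹)) :=
      ⟨(by fun_prop : Continuous fun z : ℝ × ℝ =>
          exp (-(τ⁻¹ * |z.1 - z.2 + t|))).aestronglyMeasurable,
        HasFiniteIntegral.of_bounded (C := 1) (Filter.Eventually.of_forall fun z => by
          rw [norm_eq_abs, abs_exp]; exact exp_le_one' (neg_nonpos.mpr (by positivity)))⟩
    have hprod : (∫ z : ℝ × ℝ, exp (-(τ⁻¹ * |z.1 - z.2 + t|))
          ∂((expMeasure σ₃⁻¹).prod (expMeasure σ₃⁻¹)))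
        = ∫ w, ∫ x, exp (-(τ⁻¹ * |w - x + t|)) ∂(expMeasure σ₃⁻¹) ∂(expMeasure σ₃⁻¹) :=
      integral_prod _ hint3
    rw [hmap, hprod]
    simp only [integral_expMeasure hq]
  have hint2 : Integrable (fun z : ℝ × ℝ => ∫ w in Ioi (0:ℝ), σ₃⁻¹ * exp (-(σ₃⁻¹ * w)) *
      ∫ x in Ioi (0:ℝ), σ₃⁻¹ * exp (-(σ₃⁻¹ * x)) * exp (-(τ⁻¹ * |w - x + (z.1 - z.2)|)))
      ((expMeasure σ₂⁻¹).prod (expMeasure σ₂⁻¹)) :=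
    ⟨(hSM.comp_measurable hsub).aestronglyMeasurable,
      HasFiniteIntegral.of_bounded (C := 1) (Filter.Eventually.of_forall fun z => by
        rw [norm_eq_abs]; exact hgbd _)⟩
  rw [step1, step2, step3, step4]
  simp only [hF]
  rw [hmX]
  rw [integral_map hsub.aemeasurable hSM.aestronglyMeasurable]
  rw [integral_prod _ hint2]
  simp only [integral_expMeasure hm]
  simp only [Jval hp hq hpq]
  rw [glue hm hp hq]
  have k1 : σ₃⁻¹ ^ 2 - τ⁻¹ ^ 2 ≠ 0 := sq_sub_sq_ne hp hq hpq
  have hτ' : τ ≠ 0 := hτ.ne'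
  have hσ₂' : σ₂ ≠ 0 := hσ₂.ne'
  have hσ₃' : σ₃ ≠ 0 := hσ₃.ne'
  have d1 : τ + σ₂ ≠ 0 := by positivity
  have d2 : τ + σ₃ ≠ 0 := by positivity
  have d3 : σ₂ + σ₃ ≠ 0 := by positivity
  have d4 : σ₃ + σ₂ ≠ 0 := by positivity
  have hts : τ ^ 2 - σ₃ ^ 2 ≠ 0 := by
    rw [show τ ^ 2 - σ₃ ^ 2 = (τ - σ₃) * (τ + σ₃) by ring]
    exact mul_ne_zero (sub_ne_zero.mpr hne) d2
  have k2 : σ₂⁻¹ + τ⁻¹ ≠ 0 := by positivity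
  have k3 : σ₂⁻¹ + σ₃⁻¹ ≠ 0 := by positivity
  have A1 : σ₃⁻¹ ^ 2 / (σ₃⁻¹ ^ 2 - τ⁻¹ ^ 2) = τ ^ 2 / (τ ^ 2 - σ₃ ^ 2) := by
    rw [div_eq_div_iff k1 hts]; field_simp
  have A2 : τ⁻¹ * σ₃⁻¹ / (σ₃⁻¹ ^ 2 - τ⁻¹ ^ 2) = τ * σ₃ / (τ ^ 2 - σ₃ ^ 2) := by
    rw [div_eq_div_iff k1 hts]; field_simp
  have A3 : σ₂⁻¹ / (σ₂⁻¹ + τ⁻¹) = τ / (τ + σ₂) := by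
    rw [div_eq_div_iff k2 d1]; field_simp
  have A4 : σ₂⁻¹ / (σ₂⁻¹ + σ₃⁻¹) = σ₃ / (σ₃ + σ₂) := by
    rw [div_eq_div_iff k3 d4]; field_simp
  rw [A1, A2, A3, A4]
  rw [div_mul_div_comm, div_mul_div_comm, div_sub_div _ _
    (mul_ne_zero hts d1) (mul_ne_zero hts d4), div_eq_div_iff
    (mul_ne_zero (mul_ne_zero hts d1) (mul_ne_zero hts d4))
    (mul_ne_zero (mul_ne_zero d1 d2) d3)]
  ring
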